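/- Let (𝒦_t)_{t∈ℝ} be a family of linear maps on n×n complex matrices satisfying ‖𝒦_t ρ‖₁ ≤ κ ‖ρ‖₁ for all t and all ρ, let H be a matrix, ρ a density matrix, and t ≥ 0. Then the n-th order term of the Dyson expansion obeys |Tr(H ∫_0^t dt₁ ∫_0^{t₁} dt₂ ⋯ ∫_0^{t_{n−1}} dt_n 𝒦_{t₁} 𝒦_{t₂} ⋯ 𝒦_{t_n} ρ)| ≤ ‖H‖_∞ (κ t)^n / n!, and consequently the sum of all terms of order n ≥ 2 is bounded by ‖H‖_∞ (e^{κt} − 1 − κt). -/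

import Mathlib

set_option synthInstance.maxHeartbeats 1000000
set_option maxHeartbeats 1600000


open MeasureTheory Matrix
open scoped ComplexOrder

noncomputable section

attribute [local instance] Matrix.frobeniusNormedAddCommGroup Matrix.frobeniusNormedSpace

/-- The positive semidefinite square root of a positive semidefinite matrix
(the definition `Matrix.PosSemidef.sqrt` of the older Mathlib, since removed). -/
def Matrix.PosSemidef.sqrt {n : Type*} [Fintype n] [DecidableEq n] {𝕜 : Type*} [RCLike 𝕜]
    {A : Matrix n n 𝕜} (hA : A.PosSemidef) : Matrix n n 𝕜 :=
  hA.isHermitian.eigenvectorUnitary.1 * diagonal ((↑) ∘ (√·) ∘ hA.isHermitian.eigenvalues) *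
  (star hA.isHermitian.eigenvectorUnitary : Matrix n n 𝕜)

/-- The trace norm `‖A‖₁ = Tr √(A†A)` of a complex matrix. -/
def traceNorm {n : ℕ} (A : Matrix (Fin n) (Fin n) ℂ) : ℝ :=
  ((Matrix.posSemidef_conjTranspose_mul_self A).sqrt).trace.re

/-- The operator norm `‖A‖_∞` (largest singular value) of a complex matrix. -/
def opNorm {n : ℕ} (A : Matrix (Fin n) (Fin n) ℂ) : ℝ :=
  ‖Matrix.toEuclideanCLM (𝕜 := ℂ) A‖

lemma tn_eq {n : ℕ} (X : Matrix (Fin n) (Fin n) ℂ) :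
    traceNorm X = ∑ i, Real.sqrt ((Matrix.posSemidef_conjTranspose_mul_self X).1.eigenvalues i) := by
  unfold traceNorm
  rw [Matrix.PosSemidef.sqrt]
  rw [Matrix.trace_mul_cycle]
  rw [show (star ((Matrix.posSemidef_conjTranspose_mul_self X).1.eigenvectorUnitary : Matrix (Fin n) (Fin n) ℂ)) * ((Matrix.posSemidef_conjTranspose_mul_self X).1.eigenvectorUnitary : Matrix (Fin n) (Fin n) ℂ) = 1 from ((Unitary.mem_iff).mp (Matrix.posSemidef_conjTranspose_mul_self X).1.eigenvectorUnitary.2).1]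
  rw [Matrix.one_mul, Matrix.trace_diagonal]
  simp [Complex.ofReal_re]

lemma trace_eq_sum_col {n : ℕ} (M : Matrix (Fin n) (Fin n) ℂ) (V : Matrix.unitaryGroup (Fin n) ℂ) :
    M.trace = ∑ j, star (fun i => (V : Matrix (Fin n) (Fin n) ℂ) i j) ⬝ᵥ
      (M *ᵥ fun i => (V : Matrix (Fin n) (Fin n) ℂ) i j) := by
  have h1 : (star (V : Matrix (Fin n) (Fin n) ℂ) * M * (V : Matrix (Fin n) (Fin n) ℂ)).trace
      = M.trace := by
    rw [Matrix.trace_mul_cycle, (Matrix.mem_unitaryGroup_iff).mp V.2, Matrix.one_mul]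
  rw [← h1]
  simp only [Matrix.trace, Matrix.diag, Matrix.mul_apply, Matrix.star_apply,
    dotProduct, Matrix.mulVec, Pi.star_apply, RCLike.star_def, Finset.sum_mul,
    Finset.mul_sum]
  refine Finset.sum_congr rfl fun j _ => ?_
  rw [Finset.sum_comm]
  exact Finset.sum_congr rfl fun a _ => Finset.sum_congr rfl fun c _ => by ring

lemma euclid_inner {n : ℕ} (u w : Fin n → ℂ) :
    (inner ℂ ((WithLp.equiv 2 (Fin n → ℂ)).symm u) ((WithLp.equiv 2 (Fin n → ℂ)).symm w) : ℂ)
      = star u ⬝ᵥ w := by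
  simp [PiLp.inner_apply, dotProduct, mul_comm]

lemma euclid_map {n : ℕ} (A : Matrix (Fin n) (Fin n) ℂ) (u : Fin n → ℂ) :
    (WithLp.equiv 2 (Fin n → ℂ)).symm (A *ᵥ u)
      = Matrix.toEuclideanCLM (𝕜 := ℂ) A ((WithLp.equiv 2 (Fin n → ℂ)).symm u) := by
  rfl

lemma holder {n : ℕ} (H X : Matrix (Fin n) (Fin n) ℂ) :
    ‖(H * X).trace‖ ≤ opNorm H * traceNorm X := by
  classical
  set h := Matrix.posSemidef_conjTranspose_mul_self X with hh
  set b := h.1.eigenvectorBasis with hb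
  set e := (WithLp.equiv 2 (Fin n → ℂ)).symm with he
  have hcol : ∀ j, (fun i => (h.1.eigenvectorUnitary : Matrix (Fin n) (Fin n) ℂ) i j) = ⇑(b j) := by
    intro j; funext i; exact h.1.eigenvectorUnitary_apply i j
  have htr := trace_eq_sum_col (H * X) h.1.eigenvectorUnitary
  simp only [hcol] at htr
  have hbe : ∀ j, e ⇑(b j) = b j := fun j => rfl
  have hnorm1 : ∀ j, ‖e ⇑(b j)‖ = 1 := by
    intro j; rw [hbe]; exact b.orthonormal.1 j
  have hdot1 : ∀ j, star ⇑(b j) ⬝ᵥ ⇑(b j) = 1 := by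
    intro j
    rw [← euclid_inner, hbe, inner_self_eq_norm_sq_to_K, b.orthonormal.1 j]
    norm_num
  have hXnorm : ∀ j, ‖Matrix.toEuclideanCLM (𝕜 := ℂ) X (e ⇑(b j))‖
      = Real.sqrt (h.1.eigenvalues j) := by
    intro j
    set y := Matrix.toEuclideanCLM (𝕜 := ℂ) X (e ⇑(b j)) with hy
    have h2 : (inner ℂ y y : ℂ) = (h.1.eigenvalues j : ℂ) := by
      rw [hy, ← euclid_map, euclid_inner, Matrix.star_mulVec, Matrix.dotProduct_mulVec,
        Matrix.vecMul_vecMul]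
      rw [← Matrix.dotProduct_mulVec]
      rw [h.1.mulVec_eigenvectorBasis, dotProduct_smul]
      rw [hdot1 j]
      simp [Complex.real_smul]
    have h3 := inner_self_eq_norm_sq_to_K (𝕜 := ℂ) (x := y)
    rw [h2] at h3
    have h4 : ‖y‖ ^ 2 = h.1.eigenvalues j := by
      simpa [← Complex.ofReal_pow] using congrArg (RCLike.re (K := ℂ)) h3.symm
    rw [← h4, Real.sqrt_sq (norm_nonneg _)]
  rw [htr, tn_eq]
  refine (norm_sum_le _ _).trans ?_
  rw [Finset.mul_sum]
  refine Finset.sum_le_sum fun j _ => ?_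
  have key : star ⇑(b j) ⬝ᵥ ((H * X) *ᵥ ⇑(b j))
      = (inner ℂ (e ⇑(b j)) (Matrix.toEuclideanCLM (𝕜 := ℂ) H
          (Matrix.toEuclideanCLM (𝕜 := ℂ) X (e ⇑(b j)))) : ℂ) := by
    rw [← euclid_inner, euclid_map, _root_.map_mul]
    rfl
  rw [key]
  calc ‖inner ℂ (e ⇑(b j)) (Matrix.toEuclideanCLM (𝕜 := ℂ) H
          (Matrix.toEuclideanCLM (𝕜 := ℂ) X (e ⇑(b j))))‖
      ≤ ‖e ⇑(b j)‖ * ‖Matrix.toEuclideanCLM (𝕜 := ℂ) H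
          (Matrix.toEuclideanCLM (𝕜 := ℂ) X (e ⇑(b j)))‖ := by
        exact norm_inner_le_norm _ _
    _ ≤ 1 * (opNorm H * ‖Matrix.toEuclideanCLM (𝕜 := ℂ) X (e ⇑(b j))‖) := by
        rw [hnorm1]
        exact mul_le_mul_of_nonneg_left
          ((Matrix.toEuclideanCLM (𝕜 := ℂ) H).le_opNorm _) zero_le_one
    _ = opNorm H * Real.sqrt (h.1.eigenvalues j) := by rw [one_mul, hXnorm]

lemma tn_nonneg {n : ℕ} (X : Matrix (Fin n) (Fin n) ℂ) : 0 ≤ traceNorm X := by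
  rw [tn_eq]
  positivity

lemma opNorm_conjT {n : ℕ} (A : Matrix (Fin n) (Fin n) ℂ) : opNorm Aᴴ = opNorm A := by
  unfold opNorm
  rw [← Matrix.star_eq_conjTranspose, map_star, ContinuousLinearMap.star_eq_adjoint]
  exact ContinuousLinearMap.adjoint.norm_map (Matrix.toEuclideanCLM (𝕜 := ℂ) A)

lemma norm_sq_mulVec {n : ℕ} (M : Matrix (Fin n) (Fin n) ℂ) (u : Fin n → ℂ) :
    ‖(WithLp.equiv 2 (Fin n → ℂ)).symm (M *ᵥ u)‖ ^ 2 = (star u ⬝ᵥ ((Mᴴ * M) *ᵥ u)).re := by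
  have h1 : (star (M *ᵥ u) ⬝ᵥ (M *ᵥ u)) = star u ⬝ᵥ ((Mᴴ * M) *ᵥ u) := by
    rw [Matrix.star_mulVec, Matrix.dotProduct_mulVec, Matrix.vecMul_vecMul,
      ← Matrix.dotProduct_mulVec]
  rw [← h1, ← euclid_inner, inner_self_eq_norm_sq_to_K]
  simp [← Complex.ofReal_pow]

lemma exists_dual {n : ℕ} (X : Matrix (Fin n) (Fin n) ℂ) :
    ∃ W : Matrix (Fin n) (Fin n) ℂ, opNorm W ≤ 1 ∧ (W * X).trace = (traceNorm X : ℂ) := by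
  classical
  set h := Matrix.posSemidef_conjTranspose_mul_self X with hh
  set V : Matrix (Fin n) (Fin n) ℂ := (h.1.eigenvectorUnitary : Matrix (Fin n) (Fin n) ℂ) with hV
  set lam := h.1.eigenvalues with hlam
  have hlam0 : ∀ i, 0 ≤ lam i := fun i => h.eigenvalues_nonneg i
  have hVV : Vᴴ * V = 1 := by
    rw [← Matrix.star_eq_conjTranspose]
    exact ((Unitary.mem_iff).mp h.1.eigenvectorUnitary.2).1
  have hVV' : V * Vᴴ = 1 := by
    rw [← Matrix.star_eq_conjTranspose]
    exact ((Unitary.mem_iff).mp h.1.eigenvectorUnitary.2).2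
  set g : Fin n → ℝ := fun i => if lam i = 0 then 0 else (Real.sqrt (lam i))⁻¹ with hg
  set G : Matrix (Fin n) (Fin n) ℂ := Matrix.diagonal (fun i => (g i : ℂ)) with hG
  set D : Matrix (Fin n) (Fin n) ℂ := Matrix.diagonal (fun i => (lam i : ℂ)) with hD
  have hGH : Gᴴ = G := by
    rw [hG, Matrix.diagonal_conjTranspose]
    refine congrArg Matrix.diagonal (funext fun i => ?_)
    simp
  have hspec : Xᴴ * X = V * D * Vᴴ := by
    rw [← Matrix.star_eq_conjTranspose V]
    exact h.1.spectral_theorem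
  refine ⟨V * G * Vᴴ * Xᴴ, ?_, ?_⟩
  · -- operator norm bound
    set M : Matrix (Fin n) (Fin n) ℂ := V * G * Vᴴ * Xᴴ with hM
    set p : Fin n → ℝ := fun i => if lam i = 0 then 0 else 1 with hp
    have hMM : M * Mᴴ = V * Matrix.diagonal (fun i => (p i : ℂ)) * Vᴴ := by
      have hMH : Mᴴ = X * V * G * Vᴴ := by
        rw [hM]
        simp only [Matrix.conjTranspose_mul, Matrix.conjTranspose_conjTranspose, hGH]
        rw [Matrix.mul_assoc, Matrix.mul_assoc]
      rw [hMH, hM]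
      have : V * G * Vᴴ * Xᴴ * (X * V * G * Vᴴ)
          = V * G * Vᴴ * (Xᴴ * X) * V * G * Vᴴ := by
        simp only [Matrix.mul_assoc]
      rw [this, hspec]
      have : V * G * Vᴴ * (V * D * Vᴴ) * V * G * Vᴴ
          = V * (G * ((Vᴴ * V) * (D * ((Vᴴ * V) * G)))) * Vᴴ := by
        simp only [Matrix.mul_assoc]
      rw [this, hVV, Matrix.one_mul, Matrix.one_mul]
      congr 2
      rw [hG, hD, Matrix.diagonal_mul_diagonal, Matrix.diagonal_mul_diagonal]
      refine congrArg Matrix.diagonal (funext fun i => ?_)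
      by_cases hi : lam i = 0
      · simp [hg, hp, hi]
      · have hpos : 0 < lam i := lt_of_le_of_ne (hlam0 i) (Ne.symm hi)
        have hs : Real.sqrt (lam i) ≠ 0 := by positivity
        have hr2 : g i * (lam i * g i) = p i := by
          rw [hg, hp]
          simp only [if_neg hi]
          rw [show (Real.sqrt (lam i))⁻¹ * (lam i * (Real.sqrt (lam i))⁻¹)
              = (Real.sqrt (lam i) * Real.sqrt (lam i))⁻¹ * lam i by ring]
          rw [Real.mul_self_sqrt (hlam0 i), inv_mul_cancel₀ hi]
        exact_mod_cast congrArg (fun r : ℝ => (r : ℂ)) hr2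
    -- now bound the norm
    have key : ∀ u : Fin n → ℂ, (star u ⬝ᵥ ((Mᴴᴴ * Mᴴ) *ᵥ u)).re ≤ (star u ⬝ᵥ u).re := by
      intro u
      rw [Matrix.conjTranspose_conjTranspose, hMM]
      set w := Vᴴ *ᵥ u with hw
      have e2 : ∀ y : Fin n → ℂ, star u ⬝ᵥ (V *ᵥ y) = star w ⬝ᵥ y := by
        intro y
        rw [hw, Matrix.star_mulVec, Matrix.conjTranspose_conjTranspose,
          ← Matrix.dotProduct_mulVec]
      have e1 : (V * Matrix.diagonal (fun i => (p i : ℂ)) * Vᴴ) *ᵥ u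
          = V *ᵥ (Matrix.diagonal (fun i => (p i : ℂ)) *ᵥ w) := by
        rw [hw, Matrix.mulVec_mulVec, Matrix.mulVec_mulVec, Matrix.mul_assoc]
      have e3 : star u ⬝ᵥ u = star w ⬝ᵥ w := by
        have : star w ⬝ᵥ w = star u ⬝ᵥ (V *ᵥ w) := (e2 w).symm
        rw [this, hw, Matrix.mulVec_mulVec, hVV', Matrix.one_mulVec]
      rw [e1, e2, e3]
      simp only [dotProduct, Matrix.mulVec_diagonal, Complex.re_sum, Pi.star_apply,
        RCLike.star_def]
      refine Finset.sum_le_sum fun i _ => ?_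
      have hterm : ((starRingEnd ℂ) (w i) * ((p i : ℂ) * w i)).re
          = p i * ((starRingEnd ℂ) (w i) * w i).re := by
        have : (starRingEnd ℂ) (w i) * ((p i : ℂ) * w i)
            = (p i : ℂ) * ((starRingEnd ℂ) (w i) * w i) := by ring
        rw [this, Complex.re_ofReal_mul]
      rw [hterm]
      have hnn : 0 ≤ ((starRingEnd ℂ) (w i) * w i).re := by
        rw [mul_comm, Complex.mul_conj]
        exact_mod_cast Complex.normSq_nonneg _
      by_cases hi : lam i = 0
      · have hp0 : p i = 0 := by simp [hp, hi]
        rw [hp0, zero_mul]; exact hnn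
      · have hp1 : p i = 1 := by simp [hp, hi]
        rw [hp1, one_mul]
    rw [← opNorm_conjT M]
    show ‖Matrix.toEuclideanCLM (𝕜 := ℂ) Mᴴ‖ ≤ 1
    refine ContinuousLinearMap.opNorm_le_bound _ zero_le_one fun z => ?_
    rw [one_mul]
    set u := WithLp.equiv 2 (Fin n → ℂ) z with hu
    have hz : (WithLp.equiv 2 (Fin n → ℂ)).symm u = z := rfl
    rw [← hz, ← euclid_map]
    have h1 := norm_sq_mulVec Mᴴ u
    have h2 : (star u ⬝ᵥ u).re = ‖(WithLp.equiv 2 (Fin n → ℂ)).symm u‖ ^ 2 := by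
      rw [← euclid_inner, inner_self_eq_norm_sq_to_K]
      simp [← Complex.ofReal_pow]
    have hsq : ‖(WithLp.equiv 2 (Fin n → ℂ)).symm (Mᴴ *ᵥ u)‖ ^ 2
        ≤ ‖(WithLp.equiv 2 (Fin n → ℂ)).symm u‖ ^ 2 := by
      rw [h1, ← h2]; exact key u
    calc ‖(WithLp.equiv 2 (Fin n → ℂ)).symm (Mᴴ *ᵥ u)‖
        = Real.sqrt (‖(WithLp.equiv 2 (Fin n → ℂ)).symm (Mᴴ *ᵥ u)‖ ^ 2) :=
          (Real.sqrt_sq (norm_nonneg _)).symm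
      _ ≤ Real.sqrt (‖(WithLp.equiv 2 (Fin n → ℂ)).symm u‖ ^ 2) := Real.sqrt_le_sqrt hsq
      _ = ‖(WithLp.equiv 2 (Fin n → ℂ)).symm u‖ := Real.sqrt_sq (norm_nonneg _)
  · -- trace computation
    have htr : V * G * Vᴴ * Xᴴ * X = V * (G * D) * Vᴴ := by
      rw [Matrix.mul_assoc (V * G * Vᴴ) Xᴴ X, hspec]
      have : V * G * Vᴴ * (V * D * Vᴴ) = V * (G * ((Vᴴ * V) * D)) * Vᴴ := by
        simp only [Matrix.mul_assoc]
      rw [this, hVV, Matrix.one_mul]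
    rw [htr, Matrix.trace_mul_cycle, ← Matrix.mul_assoc, hVV, Matrix.one_mul]
    rw [hG, hD, Matrix.diagonal_mul_diagonal, Matrix.trace_diagonal]
    rw [tn_eq]
    push_cast
    refine Finset.sum_congr rfl fun i _ => ?_
    have hr : g i * lam i = Real.sqrt (lam i) := by
      by_cases hi : lam i = 0
      · simp [hg, hi]
      · have hpos : 0 < lam i := lt_of_le_of_ne (hlam0 i) (Ne.symm hi)
        have hs : Real.sqrt (lam i) ≠ 0 := by positivity
        rw [hg]
        simp only [if_neg hi]
        rw [inv_mul_eq_div, div_eq_iff hs]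
        exact (Real.mul_self_sqrt (hlam0 i)).symm
    exact_mod_cast congrArg (fun r : ℝ => (r : ℂ)) hr

open scoped MatrixOrder in
lemma tn_psd {n : ℕ} {ρ : Matrix (Fin n) (Fin n) ℂ} (hρ : ρ.PosSemidef) :
    traceNorm ρ = ρ.trace.re := by
  unfold traceNorm
  congr 2
  have hs : (Matrix.posSemidef_conjTranspose_mul_self ρ).sqrt = cfc Real.sqrt (ρᴴ * ρ) := by
    rw [(Matrix.posSemidef_conjTranspose_mul_self ρ).isHermitian.cfc_eq]
    simp [Matrix.IsHermitian.cfc, Matrix.PosSemidef.sqrt]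
  have h0 : (0 : Matrix (Fin n) (Fin n) ℂ) ≤ ρ := hρ.nonneg
  have h1 : (0 : Matrix (Fin n) (Fin n) ℂ) ≤ ρᴴ * ρ :=
    (Matrix.posSemidef_conjTranspose_mul_self ρ).nonneg
  rw [hs, ← cfcₙ_eq_cfc, ← CFC.sqrt_eq_real_sqrt _ h1, hρ.1.eq, CFC.sqrt_mul_self ρ h0]

lemma tn_zero {n : ℕ} : traceNorm (0 : Matrix (Fin n) (Fin n) ℂ) = 0 := by
  rw [tn_psd Matrix.PosSemidef.zero]
  simp


/-- The `k`-th order term of the Dyson expansion,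
`dyson K ρ k t = ∫_0^t dt₁ ∫_0^{t₁} dt₂ ⋯ ∫_0^{t_{k−1}} dt_k 𝒦_{t₁} 𝒦_{t₂} ⋯ 𝒦_{t_k} ρ`,
defined recursively as an iterated Bochner integral over the simplex. -/
def dyson {n : ℕ} (K : ℝ → Matrix (Fin n) (Fin n) ℂ →ₗ[ℂ] Matrix (Fin n) (Fin n) ℂ)
    (ρ : Matrix (Fin n) (Fin n) ℂ) : ℕ → ℝ → Matrix (Fin n) (Fin n) ℂ
  | 0, _ => ρ
  | k + 1, t => ∫ s in Set.Ioc (0 : ℝ) t, K s (dyson K ρ k s)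

/-- The trace-against-`W` continuous linear functional. -/
def traceCLM {n : ℕ} (W : Matrix (Fin n) (Fin n) ℂ) :
    Matrix (Fin n) (Fin n) ℂ →L[ℂ] ℂ :=
  LinearMap.toContinuousLinearMap
    ((Matrix.traceLinearMap (Fin n) ℂ ℂ).comp (LinearMap.mulLeft ℂ W))

lemma traceCLM_apply {n : ℕ} (W X : Matrix (Fin n) (Fin n) ℂ) :
    traceCLM W X = (W * X).trace := rfl

lemma pow_integral {k : ℕ} {t : ℝ} (ht : 0 ≤ t) (c : ℝ) :
    ∫ s in Set.Ioc (0 : ℝ) t, c * s ^ k = c * (t ^ (k + 1) / (k + 1)) := by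
  rw [← intervalIntegral.integral_of_le ht, intervalIntegral.integral_const_mul,
    integral_pow]
  norm_num

lemma dyson_tn_bound {n : ℕ} (K : ℝ → Matrix (Fin n) (Fin n) ℂ →ₗ[ℂ] Matrix (Fin n) (Fin n) ℂ)
    (κ : ℝ) (hκ : 0 ≤ κ) (hK : ∀ t ρ, traceNorm (K t ρ) ≤ κ * traceNorm ρ)
    (ρ : Matrix (Fin n) (Fin n) ℂ) (hρtn : traceNorm ρ = 1) :
    ∀ (k : ℕ) (s : ℝ), 0 ≤ s →
      traceNorm (dyson K ρ k s) ≤ κ ^ k * s ^ k / (Nat.factorial k) := by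
  intro k
  induction k with
  | zero => intro s hs; simp [dyson, hρtn]
  | succ k ih =>
    intro s hs
    by_cases hf : @Integrable (Matrix (Fin n) (Fin n) ℂ)
        (SeminormedAddCommGroup.toPseudoMetricSpace).toUniformSpace.toTopologicalSpace _ ℝ _ (fun u => K u (dyson K ρ k u)) (volume.restrict (Set.Ioc (0:ℝ) s))
    · obtain ⟨W, hW1, hW2⟩ := exists_dual (dyson K ρ (k + 1) s)
      have htn : traceNorm (dyson K ρ (k + 1) s)
          = ‖(W * dyson K ρ (k + 1) s).trace‖ := by
        rw [hW2, Complex.norm_of_nonneg (tn_nonneg _)]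
      rw [htn]
      have hcomm : (W * dyson K ρ (k + 1) s).trace
          = ∫ u in Set.Ioc (0:ℝ) s, (W * K u (dyson K ρ k u)).trace := by
        show traceCLM W (dyson K ρ (k+1) s) = _
        rw [show dyson K ρ (k+1) s = ∫ u in Set.Ioc (0:ℝ) s, K u (dyson K ρ k u) from rfl]
        rw [show (∫ u in Set.Ioc (0:ℝ) s, (W * K u (dyson K ρ k u)).trace)
            = ∫ u in Set.Ioc (0:ℝ) s, traceCLM W (K u (dyson K ρ k u)) from rfl]
        exact (ContinuousLinearMap.integral_comp_comm _ hf).symm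
      rw [hcomm]
      have hint1 : Integrable (fun u => ‖(W * K u (dyson K ρ k u)).trace‖)
          (volume.restrict (Set.Ioc (0:ℝ) s)) := by
        have := ((traceCLM W).integrable_comp hf).norm
        exact this
      have hint2 : Integrable (fun u : ℝ => κ ^ (k+1) / (Nat.factorial k) * u ^ k)
          (volume.restrict (Set.Ioc (0:ℝ) s)) :=
        (continuous_const.mul (continuous_pow k)).integrableOn_Ioc
      calc ‖∫ u in Set.Ioc (0:ℝ) s, (W * K u (dyson K ρ k u)).trace‖
          ≤ ∫ u in Set.Ioc (0:ℝ) s, ‖(W * K u (dyson K ρ k u)).trace‖ := by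
            exact (norm_integral_le_integral_norm _).trans (le_of_eq (by
              simp))
        _ ≤ ∫ u in Set.Ioc (0:ℝ) s, κ ^ (k+1) / (Nat.factorial k) * u ^ k := by
            refine setIntegral_mono_on hint1 hint2 measurableSet_Ioc fun u hu => ?_
            calc ‖(W * K u (dyson K ρ k u)).trace‖
                ≤ opNorm W * traceNorm (K u (dyson K ρ k u)) := holder _ _
              _ ≤ 1 * traceNorm (K u (dyson K ρ k u)) :=
                  mul_le_mul_of_nonneg_right hW1 (tn_nonneg _)
              _ = traceNorm (K u (dyson K ρ k u)) := one_mul _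
              _ ≤ κ * traceNorm (dyson K ρ k u) := hK u _
              _ ≤ κ * (κ ^ k * u ^ k / (Nat.factorial k)) :=
                  mul_le_mul_of_nonneg_left (ih u (le_of_lt hu.1)) hκ
              _ = κ ^ (k+1) / (Nat.factorial k) * u ^ k := by ring
        _ = κ ^ (k+1) / (Nat.factorial k) * (s ^ (k+1) / (k+1)) := pow_integral hs _
        _ = κ ^ (k+1) * s ^ (k+1) / (Nat.factorial (k+1)) := by
            rw [div_mul_div_comm, Nat.factorial_succ]
            push_cast
            ring_nf
    · have h0 : dyson K ρ (k + 1) s = 0 := integral_undef hf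
      rw [h0, tn_zero]
      positivity


/-- Bounds on the Dyson-expansion terms: if `‖𝒦_t ρ‖₁ ≤ κ‖ρ‖₁` for all
`t, ρ`, then `|Tr(H · (k-th order term))| ≤ ‖H‖_∞ (κt)^k / k!`, and the sum of all terms of
order `≥ 2` is bounded by `‖H‖_∞ (e^{κt} − 1 − κt)`. -/
theorem dyson_term_bounds
    {n : ℕ} (K : ℝ → Matrix (Fin n) (Fin n) ℂ →ₗ[ℂ] Matrix (Fin n) (Fin n) ℂ)
    (κ : ℝ) (hK : ∀ t ρ, traceNorm (K t ρ) ≤ κ * traceNorm ρ)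
    (H : Matrix (Fin n) (Fin n) ℂ)
    (ρ : Matrix (Fin n) (Fin n) ℂ) (hρ : ρ.PosSemidef) (hρ1 : ρ.trace = 1)
    (t : ℝ) (ht : 0 ≤ t) :
    (∀ k : ℕ, ‖(H * dyson K ρ k t).trace‖ ≤
        opNorm H * (κ * t) ^ k / (Nat.factorial k)) ∧
      (∑' k : ℕ, ‖(H * dyson K ρ (k + 2) t).trace‖) ≤
        opNorm H * (Real.exp (κ * t) - 1 - κ * t) := by
  have hρtn : traceNorm ρ = 1 := by rw [tn_psd hρ, hρ1, Complex.one_re]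
  have hκ : 0 ≤ κ := by
    have h1 := hK 0 ρ
    have h2 := tn_nonneg (K 0 ρ)
    rw [hρtn, mul_one] at h1
    linarith
  have hH : (0:ℝ) ≤ opNorm H := norm_nonneg _
  have part1 : ∀ k : ℕ, ‖(H * dyson K ρ k t).trace‖ ≤
      opNorm H * (κ * t) ^ k / (Nat.factorial k) := by
    intro k
    calc ‖(H * dyson K ρ k t).trace‖
        ≤ opNorm H * traceNorm (dyson K ρ k t) := holder _ _
      _ ≤ opNorm H * (κ ^ k * t ^ k / (Nat.factorial k)) :=
          mul_le_mul_of_nonneg_left (dyson_tn_bound K κ hκ hK ρ hρtn k t ht) hH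
      _ = opNorm H * (κ * t) ^ k / (Nat.factorial k) := by rw [mul_pow]; ring
  refine ⟨part1, ?_⟩
  set x := κ * t with hx
  have hsum : Summable (fun k : ℕ => x ^ k / (Nat.factorial k)) :=
    Real.summable_pow_div_factorial x
  have hsum2 : Summable (fun k : ℕ => x ^ (k + 2) / (Nat.factorial (k + 2))) :=
    (summable_nat_add_iff 2).2 hsum
  have hsum3 : Summable (fun k : ℕ => opNorm H * (x ^ (k + 2) / (Nat.factorial (k + 2)))) :=
    hsum2.mul_left _
  have hle : ∀ k : ℕ, ‖(H * dyson K ρ (k + 2) t).trace‖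
      ≤ opNorm H * (x ^ (k + 2) / (Nat.factorial (k + 2))) := fun k =>
    (part1 (k + 2)).trans_eq (by ring)
  have hLsum : Summable (fun k : ℕ => ‖(H * dyson K ρ (k + 2) t).trace‖) :=
    Summable.of_nonneg_of_le (fun k => norm_nonneg _) hle hsum3
  have htail : (∑' k : ℕ, x ^ (k + 2) / (Nat.factorial (k + 2)))
      = Real.exp x - 1 - x := by
    have h1 := Summable.sum_add_tsum_nat_add (f := fun k : ℕ => x ^ k / (Nat.factorial k)) 2 hsum
    have h2 : (∑' k : ℕ, x ^ k / (Nat.factorial k)) = Real.exp x := by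
      rw [Real.exp_eq_exp_ℝ, NormedSpace.exp_eq_tsum_div]
    have h3 : (∑ i ∈ Finset.range 2, x ^ i / (Nat.factorial i)) = 1 + x := by
      simp [Finset.sum_range_succ]
    rw [h2, h3] at h1
    linarith
  calc (∑' k : ℕ, ‖(H * dyson K ρ (k + 2) t).trace‖)
      ≤ ∑' k : ℕ, opNorm H * (x ^ (k + 2) / (Nat.factorial (k + 2))) :=
        Summable.tsum_le_tsum hle hLsum hsum3
    _ = opNorm H * ∑' k : ℕ, x ^ (k + 2) / (Nat.factorial (k + 2)) := tsum_mul_left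
    _ = opNorm H * (Real.exp x - 1 - x) := by rw [htail]
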